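/- Let n be a positive integer, let c > 0 be a real number with c·n ≤ 2n/5, and let H₁ and H₂ be graphs on the same vertex set V with |V| = n. Suppose that H₁ is a (c·n, 2)-expander and that for every pair of disjoint sets X, Y ⊆ V with |X| = |Y| = ⌈c·n⌉ there is an edge of H₂ with one endpoint in X and one endpoint in Y. Then the union graph H₁ ∪ H₂ is an (n/5, 2)-expander. -/

import Mathlib

open MeasureTheory Filter

noncomputable def bernoulliMeasure (p : ℝ) : Measure Bool :=
  (PMF.bernoulli (min (Real.toNNReal p) 1) (min_le_right _ _)).toMeasure

noncomputable def gnp (n : ℕ) (p : ℝ) : Measure (Sym2 (Fin n) → Bool) :=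
  Measure.pi fun _ => bernoulliMeasure p

def graphOf {n : ℕ} (ω : Sym2 (Fin n) → Bool) : SimpleGraph (Fin n) where
  Adj u v := u ≠ v ∧ ω s(u, v) = true
  symm := by
    refine ⟨fun u v h => ?_⟩
    exact ⟨h.1.symm, by rw [Sym2.eq_swap]; exact h.2⟩
  loopless := by
    refine ⟨fun u h => ?_⟩
    exact h.1 rfl

instance {n : ℕ} (ω : Sym2 (Fin n) → Bool) : DecidableRel (graphOf ω).Adj :=
  fun u v => inferInstanceAs (Decidable (u ≠ v ∧ ω s(u, v) = true))

/-- `e_G(A)`: the number of edges with both endpoints in `A`. -/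
def edgesWithin {n : ℕ} (ω : Sym2 (Fin n) → Bool) (A : Finset (Fin n)) : ℕ :=
  ((graphOf ω).edgeFinset ∩ A.sym2).card

/-- `e_G(X,Y)`: the number of edges with one endpoint in `X` and one in `Y`. -/
def edgesBetween {n : ℕ} (ω : Sym2 (Fin n) → Bool) (X Y : Finset (Fin n)) : ℕ :=
  ((graphOf ω).edgeFinset.filter fun e => ∃ x ∈ X, ∃ y ∈ Y, e = s(x, y)).card

/-- `X_i`: the number of vertices of degree exactly `i`. -/
def degCount {n : ℕ} (ω : Sym2 (Fin n) → Bool) (i : ℕ) : ℕ :=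
  (Finset.univ.filter fun v => (graphOf ω).degree v = i).card

/-- `μ_i = E[X_i]`. -/
noncomputable def muDeg (n : ℕ) (p : ℝ) (i : ℕ) : ℝ :=
  ∫ ω, (degCount ω i : ℝ) ∂(gnp n p)

/-- Outer neighbourhood of a vertex set. -/
def outerNbhd {V : Type*} (G : SimpleGraph V) (U : Set V) : Set V :=
  {v | v ∉ U ∧ ∃ u ∈ U, G.Adj u v}

/-- `G` is a `(t,k)`-expander. -/
def IsExpander {V : Type*} (G : SimpleGraph V) (t k : ℝ) : Prop :=
  ∀ U : Set V, (U.ncard : ℝ) ≤ t → k * U.ncard ≤ ((outerNbhd G U).ncard : ℝ)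

/-- Length of a longest path in `G`. -/
noncomputable def longestPathLength {V : Type*} (G : SimpleGraph V) : ℕ :=
  sSup {l : ℕ | ∃ (u v : V) (p : G.Walk u v), p.IsPath ∧ p.length = l}

/-- `e` is a booster for `G`. -/
def IsBooster {V : Type*} [Fintype V] [DecidableEq V] (G : SimpleGraph V) (e : Sym2 V) : Prop :=
  ¬ e.IsDiag ∧ e ∉ G.edgeSet ∧
    ((G ⊔ SimpleGraph.fromEdgeSet {e}).IsHamiltonian ∨
      longestPathLength G < longestPathLength (G ⊔ SimpleGraph.fromEdgeSet {e}))

/-- The set of boosters of `G`. -/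
def boosters {V : Type*} [Fintype V] [DecidableEq V] (G : SimpleGraph V) : Set (Sym2 V) :=
  {e | IsBooster G e}

/-- a `(cn, 2)`-expander together with a graph joining all pairs of
disjoint `⌈cn⌉`-sets is an `(n/5, 2)`-expander. -/
theorem stmt_17 (n : ℕ) (hn : 1 ≤ n) (c : ℝ) (hc : 0 < c)
    (hcn : c * n ≤ 2 * n / 5)
    (H₁ H₂ : SimpleGraph (Fin n))
    (h₁ : IsExpander H₁ (c * n) 2)
    (h₂ : ∀ X Y : Set (Fin n), Disjoint X Y → X.ncard = ⌈c * (n : ℝ)⌉₊ →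
      Y.ncard = ⌈c * (n : ℝ)⌉₊ → ∃ x ∈ X, ∃ y ∈ Y, H₂.Adj x y) :
    IsExpander (H₁ ⊔ H₂) ((n : ℝ) / 5) 2 := by
  intro U hU
  by_cases h : (U.ncard : ℝ) ≤ c * n
  · refine (h₁ U h).trans ?_
    have hsub : outerNbhd H₁ U ⊆ outerNbhd (H₁ ⊔ H₂) U := by
      rintro v ⟨hv, u, hu, hadj⟩
      exact ⟨hv, u, hu, Or.inl hadj⟩
    exact_mod_cast Set.ncard_le_ncard hsub (Set.toFinite _)
  · push_neg at h
    set N := outerNbhd (H₁ ⊔ H₂) U with hNdef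
    by_contra hcon
    push_neg at hcon
    have hcl : ⌈c * (n : ℝ)⌉₊ ≤ U.ncard := Nat.ceil_le.mpr h.le
    obtain ⟨X, hXU, hX⟩ := Set.exists_subset_card_eq hcl
    have hcompl : ((U ∪ N).ncard : ℝ) + (((U ∪ N)ᶜ : Set (Fin n)).ncard : ℝ) = n := by
      have h1 := Set.ncard_add_ncard_compl (U ∪ N)
      have h2 : Nat.card (Fin n) = n := by simp
      exact_mod_cast h2 ▸ h1
    have hle : ((U ∪ N).ncard : ℝ) ≤ (U.ncard : ℝ) + (N.ncard : ℝ) := by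
      exact_mod_cast Set.ncard_union_le U N
    have hWcard : (c * n : ℝ) ≤ (((U ∪ N)ᶜ : Set (Fin n)).ncard : ℝ) := by
      linarith
    have hWl : ⌈c * (n : ℝ)⌉₊ ≤ ((U ∪ N)ᶜ : Set (Fin n)).ncard := Nat.ceil_le.mpr hWcard
    obtain ⟨Y, hYW, hY⟩ := Set.exists_subset_card_eq hWl
    have hdisj : Disjoint X Y := Set.disjoint_left.mpr fun a haX haY =>
      (hYW haY) (Or.inl (hXU haX))
    obtain ⟨x, hx, y, hy, hadj⟩ := h₂ X Y hdisj hX hY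
    have hyU : y ∉ U := fun hyU => (hYW hy) (Or.inl hyU)
    have hyN : y ∈ N := ⟨hyU, x, hXU hx, Or.inr hadj⟩
    exact (hYW hy) (Or.inr hyN)
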